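/- arXiv:2106.04925 — 4 statements merged into one kernel-verified Lean document; each statement's English description precedes it below -/
import Mathlib

section
/- Let 0 < e < 1 and define K₁(e) = 2·arctanh((1−e)/√(1−e²)) − √(1−e²). Then K₁(e) > 0 for all e ∈ (0,1). -/
open Real

/-- The inverse hyperbolic tangent, artanh x = (1/2)·log((1+x)/(1−x)). -/
noncomputable def artanh (x : ℝ) : ℝ := Real.log ((1 + x) / (1 - x)) / 2

lemma exp_ineq_aux (t : ℝ) (ht : 0 ≤ t) :
    (1 - t) * Real.exp t ≤ (1 + t) * Real.exp (-t) := by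
  set f : ℝ → ℝ := fun x => (1 + x) * Real.exp (-x) - (1 - x) * Real.exp x with hf
  have hderiv : ∀ x : ℝ, HasDerivAt f (x * (Real.exp x - Real.exp (-x))) x := by
    intro x
    have h1 : HasDerivAt (fun x : ℝ => (1 + x) * Real.exp (-x))
        (1 * Real.exp (-x) + (1 + x) * (-Real.exp (-x))) x := by
      have := ((Real.hasDerivAt_exp (-x)).comp x ((hasDerivAt_id x).neg))
      exact ((hasDerivAt_id x).const_add 1).mul (by simpa [Function.comp_def] using this)
    have h2 : HasDerivAt (fun x : ℝ => (1 - x) * Real.exp x)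
        ((-1) * Real.exp x + (1 - x) * Real.exp x) x :=
      ((hasDerivAt_id x).const_sub 1).mul (Real.hasDerivAt_exp x)
    have := h1.sub h2
    refine this.congr_deriv ?_
    ring
  have hmono : MonotoneOn f (Set.Ici (0:ℝ)) := by
    apply monotoneOn_of_deriv_nonneg (convex_Ici 0)
    · exact (Continuous.continuousOn (by continuity))
    · intro x hx
      exact (hderiv x).differentiableAt.differentiableWithinAt
    · intro x hx
      rw [(hderiv x).deriv]
      simp only [interior_Ici, Set.mem_Ioi] at hx
      have : Real.exp (-x) ≤ Real.exp x := Real.exp_le_exp.mpr (by linarith)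
      nlinarith
  have h0 : f 0 = 0 := by simp [hf]
  have := hmono (Set.self_mem_Ici) (Set.mem_Ici.mpr ht) ht
  rw [h0] at this
  simp only [hf] at this
  linarith

lemma two_mul_le_log (t : ℝ) (ht0 : 0 ≤ t) (ht1 : t < 1) :
    2 * t ≤ Real.log ((1 + t) / (1 - t)) := by
  have h1t : (0:ℝ) < 1 - t := by linarith
  have h1t' : (0:ℝ) < 1 + t := by linarith
  have key : Real.exp (2 * t) ≤ (1 + t) / (1 - t) := by
    have h := exp_ineq_aux t ht0
    rw [le_div_iff₀ h1t]
    have hee : Real.exp (2 * t) = Real.exp t * Real.exp t := by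
      rw [two_mul, Real.exp_add]
    have hone : Real.exp (-t) * Real.exp t = 1 := by
      rw [← Real.exp_add]; simp
    nlinarith [Real.exp_pos t, Real.exp_pos (-t)]
  calc 2 * t = Real.log (Real.exp (2 * t)) := (Real.log_exp _).symm
    _ ≤ Real.log ((1 + t) / (1 - t)) :=
        Real.log_le_log (Real.exp_pos _) key

/-- K₁(e) = 2·artanh((1−e)/√(1−e²)) − √(1−e²) is positive for e ∈ (0,1). -/
theorem K1_pos (e : ℝ) (he0 : 0 < e) (he1 : e < 1) :
    0 < 2 * _root_.artanh ((1 - e) / Real.sqrt (1 - e ^ 2)) - Real.sqrt (1 - e ^ 2) := by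
  have h2 : (0:ℝ) < 1 - e ^ 2 := by nlinarith
  set s := Real.sqrt (1 - e ^ 2) with hs
  have hspos : 0 < s := Real.sqrt_pos.mpr h2
  have hs2 : s ^ 2 = 1 - e ^ 2 := Real.sq_sqrt h2.le
  set t := (1 - e) / s with htdef
  have ht0 : 0 < t := div_pos (by linarith) hspos
  have ht1 : t < 1 := by
    rw [htdef, div_lt_one hspos]
    nlinarith
  have hlog := two_mul_le_log t ht0.le ht1
  have hartanh : _root_.artanh t = Real.log ((1 + t) / (1 - t)) / 2 := rfl
  have h2t : s < 2 * t := by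
    have heq : 2 * t = 2 * (1 - e) / s := by rw [htdef]; ring
    rw [heq, lt_div_iff₀ hspos]
    nlinarith
  have : 2 * _root_.artanh t = Real.log ((1 + t) / (1 - t)) := by
    rw [hartanh]; ring
  linarith
end

section
/- Let 0 < e < 1 and define the complex function f(φ) = 2·arctan((1−e)·tan(φ/2)/√(1−e²)) − e·√(1−e²)·sin φ/(1 + e cos φ) on (−π, π) ⊂ ℝ, extended by analytic continuation along the ray φ = π/2 + is, s ≥ 0 (or any path with Im φ → +∞). Then f(φ) converges to i·K₁ as Im φ → +∞ along such a path, where K₁ = 2·arctanh((1−e)/√(1−e²)) − √(1−e²). -/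
open Real Complex Filter

/-- The complex function f(φ) = 2·arctan((1−e)·tan(φ/2)/√(1−e²))
− e·√(1−e²)·sin φ/(1 + e cos φ). -/
noncomputable def keplerTime (e : ℝ) (φ : ℂ) : ℂ :=
  2 * Complex.arctan (((1 - e : ℝ) : ℂ) * Complex.tan (φ / 2) / ((Real.sqrt (1 - e ^ 2) : ℝ) : ℂ))
    - (e : ℂ) * ((Real.sqrt (1 - e ^ 2) : ℝ) : ℂ) * Complex.sin φ / (1 + (e : ℂ) * Complex.cos φ)

lemma tan_aux (z : ℂ) : Complex.tan z =
    Complex.I * (1 - Complex.exp (2 * z * Complex.I)) / (1 + Complex.exp (2 * z * Complex.I)) := by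
  have hc : (2 : ℂ) * Complex.exp (z * Complex.I) ≠ 0 :=
    mul_ne_zero two_ne_zero (Complex.exp_ne_zero _)
  have e1 : Complex.exp (-z * Complex.I) * Complex.exp (z * Complex.I) = 1 := by
    rw [← Complex.exp_add, show -z * Complex.I + z * Complex.I = 0 by ring, Complex.exp_zero]
  have e2 : Complex.exp (z * Complex.I) * Complex.exp (z * Complex.I)
      = Complex.exp (2 * z * Complex.I) := by
    rw [← Complex.exp_add]; ring_nf
  rw [Complex.tan_eq_sin_div_cos, ← mul_div_mul_right (Complex.sin z) (Complex.cos z) hc]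
  congr 1
  · rw [Complex.sin]
    linear_combination Complex.I * e1 - Complex.I * e2
  · rw [Complex.cos]
    linear_combination e1 + e2

lemma sincos_aux (e : ℝ) (φ : ℂ) :
    Complex.sin φ / (1 + (e : ℂ) * Complex.cos φ) =
      (1 - Complex.exp (φ * Complex.I) ^ 2) * Complex.I /
        (2 * Complex.exp (φ * Complex.I) + e * (Complex.exp (φ * Complex.I) ^ 2 + 1)) := by
  have hc : (2 : ℂ) * Complex.exp (φ * Complex.I) ≠ 0 :=
    mul_ne_zero two_ne_zero (Complex.exp_ne_zero _)
  have e1 : Complex.exp (-φ * Complex.I) * Complex.exp (φ * Complex.I) = 1 := by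
    rw [← Complex.exp_add, show -φ * Complex.I + φ * Complex.I = 0 by ring, Complex.exp_zero]
  rw [← mul_div_mul_right (Complex.sin φ) (1 + (e : ℂ) * Complex.cos φ) hc]
  congr 1
  · rw [Complex.sin]
    linear_combination Complex.I * e1
  · rw [Complex.cos]
    linear_combination (e : ℂ) * e1

/-- As Im φ → +∞ along a path with real part fixed in (−π, π), f(φ) → i·K₁,
where K₁ = 2·artanh((1−e)/√(1−e²)) − √(1−e²). -/
theorem keplerTime_tendsto (e : ℝ) (he0 : 0 < e) (he1 : e < 1) (x : ℝ)
    (hx : x ∈ Set.Ioo (-π) π) :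
    Tendsto (fun s : ℝ => keplerTime e ((x : ℂ) + Complex.I * (s : ℂ))) atTop
      (nhds (Complex.I *
        ((2 * _root_.artanh ((1 - e) / Real.sqrt (1 - e ^ 2)) - Real.sqrt (1 - e ^ 2) : ℝ) : ℂ))) := by
  have h1e2 : (0:ℝ) < 1 - e ^ 2 := by nlinarith
  set sq : ℝ := Real.sqrt (1 - e ^ 2) with hsqdef
  have hsq : 0 < sq := Real.sqrt_pos.mpr h1e2
  have hsq2 : sq ^ 2 = 1 - e ^ 2 := Real.sq_sqrt h1e2.le
  set c₁ : ℝ := (1 - e) / sq with hc₁def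
  have hc₁0 : 0 < c₁ := div_pos (by linarith) hsq
  have hc₁1 : c₁ < 1 := by
    rw [hc₁def, div_lt_one hsq]
    nlinarith [sq_nonneg (sq - (1 - e))]
  -- the basic exponential
  set u : ℝ → ℂ := fun s => Complex.exp (((x : ℂ) + Complex.I * s) * Complex.I) with hudef
  have hu : Tendsto u atTop (nhds 0) := by
    rw [tendsto_zero_iff_norm_tendsto_zero]
    have hnorm : ∀ s : ℝ, ‖u s‖ = Real.exp (-s) := by
      intro s
      rw [hudef]
      simp only [Complex.norm_exp]
      congr 1
      simp [Complex.add_re, Complex.mul_re]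
    simp only [hnorm]
    exact Real.tendsto_exp_atBot.comp tendsto_neg_atTop_atBot
  -- limit of tan(φ/2)
  have ht : Tendsto (fun s : ℝ => Complex.I * (1 - u s) / (1 + u s)) atTop
      (nhds (Complex.I * (1 - 0) / (1 + 0))) :=
    (tendsto_const_nhds.mul (tendsto_const_nhds.sub hu)).div
      (tendsto_const_nhds.add hu) (by norm_num)
  have harg : Tendsto
      (fun s : ℝ => ((1 - e : ℝ) : ℂ) * (Complex.I * (1 - u s) / (1 + u s)) / (sq : ℂ))
      atTop (nhds (((1 - e : ℝ) : ℂ) * (Complex.I * (1 - 0) / (1 + 0)) / (sq : ℂ))) :=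
    (ht.const_mul _).div_const _
  set p : ℂ := ((1 - e : ℝ) : ℂ) * (Complex.I * (1 - 0) / (1 + 0)) / (sq : ℂ) with hp
  have hsqC : ((sq : ℝ) : ℂ) ≠ 0 := by exact_mod_cast hsq.ne'
  have hpI : p * Complex.I = -((c₁ : ℝ) : ℂ) := by
    rw [hp, hc₁def]
    push_cast
    field_simp
    ring_nf
    simp only [Complex.I_sq]
    ring
  have hden : (1 : ℂ) - p * Complex.I ≠ 0 := by
    rw [hpI, sub_neg_eq_add]
    have : ((1 + c₁ : ℝ) : ℂ) ≠ 0 := by exact_mod_cast (by positivity : (0:ℝ) < 1 + c₁).ne'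
    simpa using this
  have hMob : Tendsto (fun s : ℝ =>
      (1 + ((1 - e : ℝ) : ℂ) * (Complex.I * (1 - u s) / (1 + u s)) / (sq : ℂ) * Complex.I) /
      (1 - ((1 - e : ℝ) : ℂ) * (Complex.I * (1 - u s) / (1 + u s)) / (sq : ℂ) * Complex.I))
      atTop (nhds ((1 + p * Complex.I) / (1 - p * Complex.I))) :=
    (tendsto_const_nhds.add (harg.mul_const _)).div
      (tendsto_const_nhds.sub (harg.mul_const _)) hden
  have hm : (1 + p * Complex.I) / (1 - p * Complex.I) = (((1 - c₁) / (1 + c₁) : ℝ) : ℂ) := by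
    rw [hpI]; push_cast; congr 1 <;> ring
  rw [hm] at hMob
  have hmem : (((1 - c₁) / (1 + c₁) : ℝ) : ℂ) ∈ Complex.slitPlane := by
    rw [Complex.mem_slitPlane_iff]
    left
    rw [Complex.ofReal_re]
    exact div_pos (by linarith) (by linarith)
  have hlog : Tendsto (fun s : ℝ => Complex.log
      ((1 + ((1 - e : ℝ) : ℂ) * (Complex.I * (1 - u s) / (1 + u s)) / (sq : ℂ) * Complex.I) /
       (1 - ((1 - e : ℝ) : ℂ) * (Complex.I * (1 - u s) / (1 + u s)) / (sq : ℂ) * Complex.I)))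
      atTop (nhds (Complex.log (((1 - c₁) / (1 + c₁) : ℝ) : ℂ))) :=
    hMob.clog hmem
  -- second term
  have he0C : (e : ℂ) ≠ 0 := by exact_mod_cast he0.ne'
  have hd : Tendsto (fun s : ℝ => 2 * u s + (e : ℂ) * ((u s) ^ 2 + 1)) atTop
      (nhds (2 * 0 + (e : ℂ) * ((0 : ℂ) ^ 2 + 1))) :=
    (hu.const_mul 2).add (((hu.pow 2).add tendsto_const_nhds).const_mul _)
  have hB : Tendsto (fun s : ℝ =>
      (1 - (u s) ^ 2) * Complex.I / (2 * u s + (e : ℂ) * ((u s) ^ 2 + 1))) atTop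
      (nhds ((1 - (0 : ℂ) ^ 2) * Complex.I / (2 * 0 + (e : ℂ) * ((0 : ℂ) ^ 2 + 1)))) :=
    ((tendsto_const_nhds.sub (hu.pow 2)).mul_const _).div hd (by simpa using he0C)
  -- assemble
  have hbig : Tendsto (fun s : ℝ =>
      2 * (-Complex.I / 2 * Complex.log
        ((1 + ((1 - e : ℝ) : ℂ) * (Complex.I * (1 - u s) / (1 + u s)) / (sq : ℂ) * Complex.I) /
         (1 - ((1 - e : ℝ) : ℂ) * (Complex.I * (1 - u s) / (1 + u s)) / (sq : ℂ) * Complex.I)))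
      - (e : ℂ) * (sq : ℂ) *
        ((1 - (u s) ^ 2) * Complex.I / (2 * u s + (e : ℂ) * ((u s) ^ 2 + 1)))) atTop
      (nhds (2 * (-Complex.I / 2 * Complex.log (((1 - c₁) / (1 + c₁) : ℝ) : ℂ))
        - (e : ℂ) * (sq : ℂ) *
          ((1 - (0 : ℂ) ^ 2) * Complex.I / (2 * 0 + (e : ℂ) * ((0 : ℂ) ^ 2 + 1))))) :=
    ((hlog.const_mul _).const_mul 2).sub (hB.const_mul _)
  have key : ∀ s : ℝ, keplerTime e ((x : ℂ) + Complex.I * s) =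
      2 * (-Complex.I / 2 * Complex.log
        ((1 + ((1 - e : ℝ) : ℂ) * (Complex.I * (1 - u s) / (1 + u s)) / (sq : ℂ) * Complex.I) /
         (1 - ((1 - e : ℝ) : ℂ) * (Complex.I * (1 - u s) / (1 + u s)) / (sq : ℂ) * Complex.I)))
      - (e : ℂ) * (sq : ℂ) *
        ((1 - (u s) ^ 2) * Complex.I / (2 * u s + (e : ℂ) * ((u s) ^ 2 + 1))) := by
    intro s
    simp only [keplerTime, Complex.arctan, ← hsqdef, hudef]
    rw [mul_div_assoc (a := (e : ℂ) * (sq : ℂ)), sincos_aux, tan_aux,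
      show 2 * (((x : ℂ) + Complex.I * s) / 2) * Complex.I
        = ((x : ℂ) + Complex.I * s) * Complex.I from by ring]
  have hfinal := Tendsto.congr (fun s => (key s).symm) hbig
  have hval : Complex.I * ((2 * _root_.artanh c₁ - sq : ℝ) : ℂ) =
      2 * (-Complex.I / 2 * Complex.log (((1 - c₁) / (1 + c₁) : ℝ) : ℂ))
        - (e : ℂ) * (sq : ℂ) *
          ((1 - (0 : ℂ) ^ 2) * Complex.I / (2 * 0 + (e : ℂ) * ((0 : ℂ) ^ 2 + 1))) := by
    rw [← Complex.ofReal_log (div_nonneg (by linarith) (by linarith) : (0 : ℝ) ≤ (1 - c₁) / (1 + c₁))]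
    have hr : Real.log ((1 - c₁) / (1 + c₁)) = -(2 * _root_.artanh c₁) := by
      rw [show (1 - c₁) / (1 + c₁) = ((1 + c₁) / (1 - c₁))⁻¹ from (inv_div _ _).symm,
        Real.log_inv, _root_.artanh]
      ring
    rw [hr]
    push_cast
    field_simp
    ring_nf
    simp [he0C]
  rw [hval]
  exact hfinal
end

section
/- Let 0 < e < 1 and ω > 0, and let φ : ℝ → ℝ be the solution of the ODE φ'(t) = ω·(1 + e cos φ(t))²/(1−e²)^{3/2} with φ(0) = 0. Then φ(t + 2π/ω) = φ(t) + 2π for all t ∈ ℝ; in particular, t ↦ (cos φ(t), sin φ(t)) is periodic with period 2π/ω. -/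
open Real

/-- The eccentric anomaly as a globally smooth function of the true anomaly. -/
noncomputable def keplerE (β : ℝ) : ℝ → ℝ :=
  fun s => s - 2 * Real.arctan (β * Real.sin s / (1 + β * Real.cos s))

lemma kepler_cos_two_arctan (x : ℝ) :
    Real.cos (2 * Real.arctan x) = (1 - x^2) / (1 + x^2) := by
  have h : (0:ℝ) < 1 + x^2 := by positivity
  rw [Real.cos_two_mul, Real.cos_sq_arctan]
  field_simp; ring

lemma kepler_sin_two_arctan (x : ℝ) :
    Real.sin (2 * Real.arctan x) = 2 * x / (1 + x^2) := by
  have h : (0:ℝ) ≤ 1 + x^2 := by positivity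
  have hs : Real.sqrt (1+x^2) * Real.sqrt (1+x^2) = 1 + x^2 := Real.mul_self_sqrt h
  have hs0 : Real.sqrt (1+x^2) ≠ 0 := by positivity
  rw [Real.sin_two_mul, Real.sin_arctan, Real.cos_arctan]
  field_simp
  rw [Real.sq_sqrt h]

lemma keplerE_hasDerivAt (e k β : ℝ) (hβ : ∀ s, 0 < 1 + β * Real.cos s)
    (he : ∀ s, 0 < 1 + e * Real.cos s)
    (h2β : e * (1 + β^2) = 2*β) (hkβ : k * (1 + β^2) = 1 - β^2) (s : ℝ) :
    HasDerivAt (keplerE β) (k / (1 + e * Real.cos s)) s := by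
  have h1 : HasDerivAt (fun x => β * Real.sin x) (β * Real.cos s) s :=
    (Real.hasDerivAt_sin s).const_mul β
  have h2 : HasDerivAt (fun x => 1 + β * Real.cos x) (β * -Real.sin s) s :=
    ((Real.hasDerivAt_cos s).const_mul β).const_add 1
  have hu' := h1.div h2 (ne_of_gt (hβ s))
  have hE := (hasDerivAt_id s).sub ((hu'.arctan).const_mul 2)
  convert hE using 1
  case e'_4 => rfl
  case e'_5 => rfl
  case e'_8 => rfl
  simp only [Pi.div_apply]
  have hβs := hβ s
  have hes := he s
  have hp := Real.sin_sq_add_cos_sq s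
  have K2 : β * Real.cos s * (1 + β * Real.cos s) - β * Real.sin s * (β * -Real.sin s)
      = β * Real.cos s + β^2 := by linear_combination β^2 * hp
  have K3 : 1 + (β * Real.sin s / (1 + β * Real.cos s)) ^ 2
      = (1 + β^2) * (1 + e * Real.cos s) / (1 + β * Real.cos s)^2 := by
    field_simp
    linear_combination β^2 * hp - Real.cos s * h2β
  rw [K2, K3]
  have hβ2 : (0:ℝ) < 1 + β^2 := by positivity
  have : 1 + Real.cos s * β ≠ 0 := by nlinarith
  field_simp
  linear_combination hkβ - Real.cos s * h2β

lemma keplerE_cos (e β : ℝ) (hβ : ∀ s, 0 < 1 + β * Real.cos s)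
    (he : ∀ s, 0 < 1 + e * Real.cos s)
    (h2β : e * (1 + β^2) = 2*β) (s : ℝ) :
    Real.cos (keplerE β s) = (Real.cos s + e) / (1 + e * Real.cos s) := by
  have hβs := hβ s
  have hes := he s
  have hp := Real.sin_sq_add_cos_sq s
  have hu2 : (0:ℝ) < 1 + (β * Real.sin s / (1 + β * Real.cos s))^2 := by positivity
  rw [keplerE, Real.cos_sub, kepler_cos_two_arctan, kepler_sin_two_arctan]
  have : 1 + Real.cos s * β ≠ 0 := by nlinarith
  have : 1 + Real.cos s * e ≠ 0 := by nlinarith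
  have hs2 : Real.sin s ^ 2 = 1 - Real.cos s ^ 2 := by linarith
  field_simp
  rw [hs2]
  linear_combination (Real.cos s ^ 2 - 1) * h2β

lemma keplerE_zero (β : ℝ) : keplerE β 0 = 0 := by
  simp [keplerE]

lemma keplerE_shift (β : ℝ) (s : ℝ) : keplerE β (s + 2*π) = keplerE β s + 2*π := by
  rw [keplerE, keplerE, Real.sin_add_two_pi, Real.cos_add_two_pi]
  ring

/-- If φ solves φ' = ω(1 + e cos φ)²/(1−e²)^{3/2} with φ(0) = 0, then
φ(t + 2π/ω) = φ(t) + 2π for all t; in particular t ↦ (cos φ(t), sin φ(t)) is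
2π/ω-periodic. -/
theorem kepler_angle_periodic (e ω : ℝ) (he0 : 0 < e) (he1 : e < 1) (hω : 0 < ω)
    (φ : ℝ → ℝ) (hdiff : Differentiable ℝ φ)
    (hode : ∀ t, deriv φ t = ω * (1 + e * Real.cos (φ t)) ^ 2 / (1 - e ^ 2) ^ ((3:ℝ)/2))
    (h0 : φ 0 = 0) :
    (∀ t, φ (t + 2 * π / ω) = φ t + 2 * π) ∧
    Function.Periodic (fun t => (Real.cos (φ t), Real.sin (φ t))) (2 * π / ω) := by
  have he2 : (0:ℝ) < 1 - e^2 := by nlinarith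
  set k := Real.sqrt (1 - e^2) with hkdef
  have hk0 : 0 < k := Real.sqrt_pos.mpr he2
  have hk2 : k^2 = 1 - e^2 := Real.sq_sqrt he2.le
  have hk3 : (1 - e^2) ^ ((3:ℝ)/2) = k^3 := by
    rw [show ((3:ℝ)/2) = (1/2) * 3 by norm_num, Real.rpow_mul he2.le,
      ← Real.sqrt_eq_rpow, ← hkdef,
      show ((3:ℝ)) = ((3:ℕ):ℝ) by norm_num, Real.rpow_natCast]
  set β := e / (1 + k) with hβdef
  have hβ0 : 0 < β := div_pos he0 (by linarith)
  have hβ1 : β < 1 := by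
    rw [hβdef, div_lt_one (by linarith)]
    nlinarith
  have h1k : (0:ℝ) < 1 + k := by linarith
  have h2β : e * (1 + β^2) = 2*β := by
    rw [hβdef]; field_simp; linear_combination hk2
  have hkβ : k * (1 + β^2) = 1 - β^2 := by
    rw [hβdef]; field_simp; linear_combination (1+k)*hk2
  have hpos : ∀ s : ℝ, 0 < 1 + e * Real.cos s := fun s => by
    nlinarith [Real.neg_one_le_cos s, Real.cos_le_one s]
  have hposβ : ∀ s : ℝ, 0 < 1 + β * Real.cos s := fun s => by
    nlinarith [Real.neg_one_le_cos s, Real.cos_le_one s]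
  set F : ℝ → ℝ := fun s => (keplerE β s - e * Real.sin (keplerE β s)) / ω with hFdef
  -- derivative of F
  have hF' : ∀ s, HasDerivAt F (k^3 / (ω * (1 + e * Real.cos s)^2)) s := by
    intro s
    have hE := keplerE_hasDerivAt e k β hposβ hpos h2β hkβ s
    have h1 := (hE.sub ((hE.sin).const_mul e)).div_const ω
    convert h1 using 1
    case e'_4 => rfl
    case e'_5 => rfl
    case e'_8 => rfl
    rw [keplerE_cos e β hposβ hpos h2β s]
    have hes := hpos s
    field_simp
    linear_combination hk2
  -- F is strictly monotone
  have hFmono : StrictMono F :=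
    strictMono_of_hasDerivAt_pos hF' (fun s => by have := hpos s; positivity)
  -- F ∘ φ = id
  have hF0 : F 0 = 0 := by
    rw [hFdef]; simp [keplerE_zero]
  have hid : ∀ t, F (φ t) = t := by
    have hd : Differentiable ℝ (fun t => F (φ t) - t) := fun t =>
      (((hF' (φ t)).comp t (hdiff t).hasDerivAt).sub (hasDerivAt_id t)).differentiableAt
    have hz : ∀ t, deriv (fun t => F (φ t) - t) t = 0 := by
      intro t
      have h : HasDerivAt (fun t => F (φ t) - t)
          (k ^ 3 / (ω * (1 + e * Real.cos (φ t)) ^ 2) * deriv φ t - 1) t :=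
        ((hF' (φ t)).comp t (hdiff t).hasDerivAt).sub (hasDerivAt_id t)
      rw [h.deriv, hode t, hk3]
      have hes := hpos (φ t)
      field_simp
      norm_num
    have hc := is_const_of_deriv_eq_zero hd hz
    intro t
    have h := hc t 0
    simp only [h0, hF0, sub_zero] at h
    linarith
  -- shift identity for F
  have hshift : ∀ s, F (s + 2*π) = F s + 2*π/ω := by
    intro s
    rw [hFdef]
    simp only [keplerE_shift, Real.sin_add_two_pi]
    field_simp
    ring
  -- main claim
  have hmain : ∀ t, φ (t + 2 * π / ω) = φ t + 2 * π := by
    intro t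
    apply hFmono.injective
    rw [hid, hshift, hid]
  refine ⟨hmain, ?_⟩
  intro t
  simp only [hmain t, Real.cos_add_two_pi, Real.sin_add_two_pi]
end

section
/- Let 0 < e < 1 and ω > 0, and let φ : ℝ → ℝ satisfy φ'(t) = ω·(1 + e cos φ(t))²/(1−e²)^{3/2}, φ(0) = 0. Then for all t with φ(t) ∈ (−π, π), one has ω·t = 2·arctan((1−e)·tan(φ(t)/2)/√(1−e²)) − e·√(1−e²)·sin φ(t)/(1 + e cos φ(t)). -/
open Real

lemma keplerF_hasDerivAt (e : ℝ) (he0 : 0 < e) (he1 : e < 1) (x : ℝ)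
    (hx : x ∈ Set.Ioo (-π) π) :
    HasDerivAt (fun y => 2 * Real.arctan ((1 - e) * Real.tan (y/2) / Real.sqrt (1 - e^2))
      - e * Real.sqrt (1 - e^2) * Real.sin y / (1 + e * Real.cos y))
      ((1 - e^2) ^ ((3:ℝ)/2) / (1 + e * Real.cos x)^2) x := by
  obtain ⟨hx1, hx2⟩ := hx
  have he2 : (0:ℝ) < 1 - e^2 := by nlinarith
  set s := Real.sqrt (1 - e^2) with hs_def
  have hs : 0 < s := Real.sqrt_pos.mpr he2
  have hs2 : s^2 = 1 - e^2 := Real.sq_sqrt he2.le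
  have hc : 0 < Real.cos (x/2) := by
    apply Real.cos_pos_of_mem_Ioo
    constructor <;> [linarith; linarith]
  have hden : 0 < 1 + e * Real.cos x := by
    nlinarith [Real.neg_one_le_cos x, Real.cos_le_one x]
  have h1 : HasDerivAt (fun y : ℝ => (1 - e) * Real.tan (y/2) / s)
      ((1 - e) * (1 / Real.cos (x/2)^2 * (1/2)) / s) x := by
    have ht : HasDerivAt (fun y : ℝ => Real.tan (y/2)) (1 / Real.cos (x/2)^2 * (1/2)) x := by
      have := (Real.hasDerivAt_tan hc.ne').comp x ((hasDerivAt_id x).div_const 2)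
      exact this.congr_deriv (by simp)
    exact ((ht.const_mul (1 - e)).div_const s)
  have h2 : HasDerivAt (fun y : ℝ => 2 * Real.arctan ((1 - e) * Real.tan (y/2) / s))
      (2 * (1 / (1 + ((1 - e) * Real.tan (x/2) / s)^2) * ((1 - e) * (1 / Real.cos (x/2)^2 * (1/2)) / s))) x :=
    ((Real.hasDerivAt_arctan _).comp x h1).const_mul 2
  have h3 : HasDerivAt (fun y : ℝ => e * s * Real.sin y / (1 + e * Real.cos y))
      ((e * s * Real.cos x * (1 + e * Real.cos x) - e * s * Real.sin x * (e * (-Real.sin x))) / (1 + e * Real.cos x)^2) x :=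
    (((Real.hasDerivAt_sin x).const_mul (e * s)).div
      (((Real.hasDerivAt_cos x).const_mul e).const_add 1) hden.ne')
  have h4 := h2.sub h3
  refine h4.congr_deriv (Eq.symm ?_)
  have hrpow : (1 - e^2) ^ ((3:ℝ)/2) = s^3 := by
    rw [hs_def, Real.sqrt_eq_rpow, ← Real.rpow_natCast ((1-e^2) ^ ((1:ℝ)/2)) 3, ← Real.rpow_mul he2.le]
    norm_num
  rw [hrpow]
  have htan : Real.tan (x/2) = Real.sin (x/2) / Real.cos (x/2) := Real.tan_eq_sin_div_cos _
  have hcosx : Real.cos x = 2 * Real.cos (x/2)^2 - 1 := by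
    have h := Real.cos_two_mul (x/2); rw [show 2*(x/2) = x by ring] at h; exact h
  have hsinx : Real.sin x = 2 * Real.sin (x/2) * Real.cos (x/2) := by
    have h := Real.sin_two_mul (x/2); rw [show 2*(x/2) = x by ring] at h; exact h
  have hpyth : Real.sin (x/2)^2 = 1 - Real.cos (x/2)^2 := by
    have := Real.sin_sq_add_cos_sq (x/2); linarith
  set c := Real.cos (x/2)
  set sn := Real.sin (x/2)
  rw [hcosx] at hden
  rw [htan, hcosx, hsinx]
  set D := 1 + e * (2*c^2-1) with hD_def
  have hD : D ≠ 0 := hden.ne'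
  have hc' : c ≠ 0 := hc.ne'
  have hs' : s ≠ 0 := hs.ne'
  have hA : 2 * (1 / (1 + ((1 - e) * (sn/c) / s)^2) * ((1 - e) * (1 / c^2 * (1/2)) / s)) = s / D := by
    field_simp
    linear_combination (-c^2) * hs2 + (-(1-e)^2) * hpyth
  rw [hA]
  have h6 : s / D = (s^3 + (e*s*(2*c^2-1)*D - e*s*(2*sn*c)*(e*(-(2*sn*c))))) / D^2 := by
    rw [div_eq_div_iff hD (pow_ne_zero 2 hD)]
    linear_combination (-s*D)*hs2 + (-4*e^2*s*c^2*D)*hpyth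
  rw [h6]
  ring

/-- If φ solves φ' = ω(1 + e cos φ)²/(1−e²)^{3/2} with φ(0) = 0, then whenever
φ(t) ∈ (−π, π) one has
ωt = 2·arctan((1−e)·tan(φ(t)/2)/√(1−e²)) − e·√(1−e²)·sin φ(t)/(1 + e cos φ(t)). -/
theorem kepler_time_formula (e ω : ℝ) (he0 : 0 < e) (he1 : e < 1) (hω : 0 < ω)
    (φ : ℝ → ℝ) (hdiff : Differentiable ℝ φ)
    (hode : ∀ t, deriv φ t = ω * (1 + e * Real.cos (φ t)) ^ 2 / (1 - e ^ 2) ^ ((3:ℝ)/2))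
    (h0 : φ 0 = 0) :
    ∀ t, φ t ∈ Set.Ioo (-π) π →
      ω * t = 2 * Real.arctan ((1 - e) * Real.tan (φ t / 2) / Real.sqrt (1 - e ^ 2))
        - e * Real.sqrt (1 - e ^ 2) * Real.sin (φ t) / (1 + e * Real.cos (φ t)) := by
  intro t ht
  set F : ℝ → ℝ := fun y => 2 * Real.arctan ((1 - e) * Real.tan (y/2) / Real.sqrt (1 - e^2))
      - e * Real.sqrt (1 - e^2) * Real.sin y / (1 + e * Real.cos y) with hF_def
  have hπ : 0 < π := Real.pi_pos
  have he2 : (0:ℝ) < 1 - e^2 := by nlinarith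
  have hmono : StrictMono φ := strictMono_of_deriv_pos (fun u => by
    rw [hode u]
    have h1 : 0 < 1 + e * Real.cos (φ u) := by
      nlinarith [Real.neg_one_le_cos (φ u), Real.cos_le_one (φ u)]
    have h2 : (0:ℝ) < (1 - e^2) ^ ((3:ℝ)/2) := Real.rpow_pos_of_pos he2 _
    positivity)
  have hseg : ∀ u ∈ Set.uIcc 0 t, φ u ∈ Set.Ioo (-π) π := by
    intro u hu
    rw [Set.mem_uIcc] at hu
    obtain ⟨h1, h2⟩ := ht
    rcases hu with ⟨hu1, hu2⟩ | ⟨hu1, hu2⟩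
    · have ha := hmono.monotone hu1
      have hb := hmono.monotone hu2
      rw [h0] at ha
      constructor <;> [linarith; linarith]
    · have ha := hmono.monotone hu1
      have hb := hmono.monotone hu2
      rw [h0] at hb
      constructor <;> [linarith; linarith]
  have hg : ∀ u ∈ Set.uIcc 0 t, HasDerivAt (fun v => F (φ v) - ω * v) 0 u := by
    intro u hu
    have hφu : HasDerivAt φ (deriv φ u) u := (hdiff u).hasDerivAt
    have hFd := keplerF_hasDerivAt e he0 he1 (φ u) (hseg u hu)
    have hcomp := (hFd.comp u hφu).sub ((hasDerivAt_id u).const_mul ω)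
    refine hcomp.congr_deriv (Eq.symm ?_)
    rw [hode u]
    have h1 : (1 + e * Real.cos (φ u)) ≠ 0 := by
      nlinarith [Real.neg_one_le_cos (φ u), Real.cos_le_one (φ u)]
    have h2 : (1 - e^2) ^ ((3:ℝ)/2) ≠ 0 := (Real.rpow_pos_of_pos he2 _).ne'
    field_simp
    ring
  have hconst : F (φ t) - ω * t = F (φ 0) - ω * 0 := by
    rcases le_total 0 t with h | h
    · have key := constant_of_has_deriv_right_zero (f := fun v => F (φ v) - ω * v) (a := 0) (b := t)
        (fun u hu => (hg u (by rwa [Set.uIcc_of_le h])).continuousAt.continuousWithinAt)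
        (fun u hu => (hg u (by rw [Set.uIcc_of_le h]; exact ⟨hu.1, hu.2.le⟩)).hasDerivWithinAt)
      simpa using key t (Set.right_mem_Icc.mpr h)
    · have key := constant_of_has_deriv_right_zero (f := fun v => F (φ v) - ω * v) (a := t) (b := 0)
        (fun u hu => (hg u (by rwa [Set.uIcc_of_ge h])).continuousAt.continuousWithinAt)
        (fun u hu => (hg u (by rw [Set.uIcc_of_ge h]; exact ⟨hu.1, hu.2.le⟩)).hasDerivWithinAt)
      have := key 0 (Set.right_mem_Icc.mpr h)
      simpa using this.symm
  have hF0 : F 0 = 0 := by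
    simp [hF_def]
  rw [h0, hF0] at hconst
  have : ω * t = F (φ t) := by linarith
  simpa [hF_def] using this
end
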